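/- Under the same assumptions (A1)–(A3), there exists C < ∞ such that for every l ≥ 1, N ≥ 1, and bounded Lipschitz φ, the bias satisfies | E[ (1/N) Σ_{n=1}^N { φ(X̄ₙ(l)) − φ(X̲ₙ(l)) } ] − [π_l − π_{l−1}](φ) | ≤ C (‖φ‖_∞ ∨ ‖φ‖_Lip) h_l^β / N. -/

import Mathlib

open MeasureTheory ProbabilityTheory

/-- The chain generated by iterating the random map `ξ` with driving noise `V`,
started at `x`. -/
noncomputable def mapChain {E U Ω : Type*} (ξ : E → U → E) (V : ℕ → Ω → U) (x : E) :
    ℕ → Ω → E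
  | 0 => fun _ => x
  | n + 1 => fun ω => ξ (mapChain ξ V x n ω) (V (n + 1) ω)

/-- The `n`-step marginal law `K^n(x, ·)` of the Markov kernel induced by the
random map `ξ` with noise law `μ`. -/
noncomputable def kIterM {E U : Type*} [MeasurableSpace E] [MeasurableSpace U]
    (ξ : E → U → E) (μ : MeasureTheory.Measure U) : ℕ → E → MeasureTheory.Measure E
  | 0, x => MeasureTheory.Measure.dirac x
  | n + 1, x => (kIterM ξ μ n x).bind fun y => μ.map fun u => ξ y u

section Helpers
set_option linter.unusedVariables false
set_option linter.unusedSectionVars false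

namespace CoupledBiasAux

variable {α β : Type*} [MeasurableSpace α] [MeasurableSpace β]

lemma integrable_of_abs_le {μ : Measure α} [IsFiniteMeasure μ] {φ : α → ℝ} {B : ℝ}
    (hm : Measurable φ) (hb : ∀ x, |φ x| ≤ B) : Integrable φ μ :=
  (integrable_const B).mono' hm.aestronglyMeasurable
    (Filter.Eventually.of_forall fun x => by simpa using hb x)

lemma abs_integral_le {μ : Measure α} [IsProbabilityMeasure μ] {φ : α → ℝ} {B : ℝ}
    (hb : ∀ᵐ x ∂μ, |φ x| ≤ B) : |∫ x, φ x ∂μ| ≤ B := by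
  have := norm_integral_le_of_norm_le (μ := μ) (f := φ) (g := fun _ => B)
    (integrable_const B) (by simpa using hb)
  simpa using this

/-- Probability of a bind. -/
lemma isProbabilityMeasure_bind (m : Measure α) [IsProbabilityMeasure m]
    (f : α → Measure β) (hf : Measurable f) (hfp : ∀ a, IsProbabilityMeasure (f a)) :
    IsProbabilityMeasure (m.bind f) := by
  constructor
  rw [Measure.bind_apply MeasurableSet.univ hf.aemeasurable]
  simp [(hfp _).measure_univ]

/-- Bochner integral against a bind of probability measures, for bounded measurable functions. -/
lemma integral_bind_of_bounds (m : Measure α) [IsProbabilityMeasure m]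
    (f : α → Measure β) (hf : Measurable f) (hfp : ∀ a, IsProbabilityMeasure (f a))
    {φ : β → ℝ} (hφ : Measurable φ) {B : ℝ} (hB : ∀ x, |φ x| ≤ B) :
    ∫ x, φ x ∂(m.bind f) = ∫ a, ∫ x, φ x ∂(f a) ∂m := by
  haveI := isProbabilityMeasure_bind m f hf hfp
  -- reduce to the nonnegative function g = φ + B
  set g : β → ℝ := fun x => φ x + B with hg_def
  have hg : Measurable g := hφ.add measurable_const
  have hg0 : ∀ x, 0 ≤ g x := fun x => by
    have := (abs_le.1 (hB x)).1; simp [hg_def]; linarith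
  have hgB : ∀ x, g x ≤ 2 * B := fun x => by
    have := (abs_le.1 (hB x)).2; simp [hg_def]; linarith
  have hofg : Measurable fun x => ENNReal.ofReal (g x) := ENNReal.measurable_ofReal.comp hg
  have key : ∫⁻ x, ENNReal.ofReal (g x) ∂(m.bind f)
      = ∫⁻ a, ∫⁻ x, ENNReal.ofReal (g x) ∂(f a) ∂m :=
    Measure.lintegral_bind hf.aemeasurable hofg.aemeasurable
  have hLle : ∀ a, (∫⁻ x, ENNReal.ofReal (g x) ∂(f a)) ≤ ENNReal.ofReal (2 * B) := by
    intro a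
    haveI := hfp a
    calc ∫⁻ x, ENNReal.ofReal (g x) ∂(f a)
        ≤ ∫⁻ _, ENNReal.ofReal (2 * B) ∂(f a) :=
          lintegral_mono fun x => ENNReal.ofReal_le_ofReal (hgB x)
      _ = ENNReal.ofReal (2 * B) := by simp [(hfp a).measure_univ]
  have hLne : ∀ a, (∫⁻ x, ENNReal.ofReal (g x) ∂(f a)) ≠ ⊤ :=
    fun a => ((hLle a).trans_lt ENNReal.ofReal_lt_top).ne
  have hginteq : ∀ (ν : Measure β), IsProbabilityMeasure ν →
      ∫ x, g x ∂ν = (∫⁻ x, ENNReal.ofReal (g x) ∂ν).toReal := by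
    intro ν hν
    exact integral_eq_lintegral_of_nonneg_ae (Filter.Eventually.of_forall hg0)
      hg.aestronglyMeasurable
  have hmeasL : Measurable fun a => ∫⁻ x, ENNReal.ofReal (g x) ∂(f a) :=
    (Measure.measurable_lintegral hofg).comp hf
  -- nonneg case
  have hnn : ∫ x, g x ∂(m.bind f) = ∫ a, ∫ x, g x ∂(f a) ∂m := by
    rw [hginteq _ inferInstance, key]
    have : ∫ a, ∫ x, g x ∂(f a) ∂m
        = (∫⁻ a, ENNReal.ofReal ((∫⁻ x, ENNReal.ofReal (g x) ∂(f a)).toReal) ∂m).toReal := by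
      have := integral_eq_lintegral_of_nonneg_ae
        (μ := m) (f := fun a => (∫⁻ x, ENNReal.ofReal (g x) ∂(f a)).toReal)
        (Filter.Eventually.of_forall fun a => ENNReal.toReal_nonneg)
        hmeasL.ennreal_toReal.aestronglyMeasurable
      rw [← this]
      refine integral_congr_ae (Filter.Eventually.of_forall fun a => ?_)
      exact hginteq _ (hfp a)
    rw [this]
    congr 1
    refine lintegral_congr_ae (Filter.Eventually.of_forall fun a => ?_)
    exact (ENNReal.ofReal_toReal (hLne a)).symm
  -- back to φ
  have hintφ : ∀ (ν : Measure β), IsProbabilityMeasure ν → ∫ x, g x ∂ν = ∫ x, φ x ∂ν + B := by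
    intro ν hν
    rw [hg_def]
    rw [integral_add (integrable_of_abs_le hφ hB) (integrable_const B)]
    simp
  rw [hintφ _ inferInstance] at hnn
  have : ∫ a, ∫ x, g x ∂(f a) ∂m = (∫ a, ∫ x, φ x ∂(f a) ∂m) + B := by
    have h1 : ∀ a, ∫ x, g x ∂(f a) = ∫ x, φ x ∂(f a) + B := fun a => hintφ _ (hfp a)
    rw [integral_congr_ae (Filter.Eventually.of_forall h1)]
    rw [integral_add _ (integrable_const B)]
    · simp
    · have hInt : Integrable (fun a => (∫⁻ x, ENNReal.ofReal (g x) ∂(f a)).toReal - B) m := by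
        refine integrable_of_abs_le (B := (ENNReal.ofReal (2*B)).toReal + |B|)
          (hmeasL.ennreal_toReal.sub measurable_const) (fun a => ?_)
        have h2 : (∫⁻ x, ENNReal.ofReal (g x) ∂(f a)).toReal ≤ (ENNReal.ofReal (2*B)).toReal :=
          ENNReal.toReal_mono ENNReal.ofReal_ne_top (hLle a)
        have h3 : 0 ≤ (∫⁻ x, ENNReal.ofReal (g x) ∂(f a)).toReal := ENNReal.toReal_nonneg
        calc |(∫⁻ x, ENNReal.ofReal (g x) ∂(f a)).toReal - B|
            ≤ |(∫⁻ x, ENNReal.ofReal (g x) ∂(f a)).toReal| + |B| := abs_sub _ _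
          _ ≤ (ENNReal.ofReal (2*B)).toReal + |B| := by rw [abs_of_nonneg h3]; linarith
      refine hInt.congr (Filter.Eventually.of_forall fun a => ?_)
      have := hginteq _ (hfp a)
      have := hintφ _ (hfp a)
      dsimp only
      linarith
  rw [this] at hnn
  linarith

end CoupledBiasAux

namespace CoupledBiasAux
variable {α : Type*} [MeasurableSpace α]

lemma integrable_of_abs_le' {μ : Measure α} [IsFiniteMeasure μ] {φ : α → ℝ} {B : ℝ}
    (hm : Measurable φ) (hb : ∀ x, |φ x| ≤ B) : Integrable φ μ :=
  (integrable_const B).mono' hm.aestronglyMeasurable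
    (Filter.Eventually.of_forall fun x => by simpa using hb x)

/-- From a setwise total-variation bound between two probability measures, deduce a bound on
differences of integrals of bounded measurable functions. -/
lemma tv_integral_bound {μ ν : Measure α} [IsProbabilityMeasure μ] [IsProbabilityMeasure ν]
    {ε G : ℝ} (hG : 0 ≤ G)
    (hd : ∀ s : Set α, MeasurableSet s → |(μ s).toReal - (ν s).toReal| ≤ ε)
    {φ : α → ℝ} (hm : Measurable φ) (hb : ∀ x, |φ x| ≤ G) :
    |(∫ x, φ x ∂μ) - ∫ x, φ x ∂ν| ≤ 2 * G * ε := by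
  have hε : 0 ≤ ε := le_trans (abs_nonneg _) (hd ∅ MeasurableSet.empty)
  set ψ : α → ℝ := fun x => φ x + G with hψ_def
  have hψm : Measurable ψ := hm.add measurable_const
  have hψ0 : ∀ x, 0 ≤ ψ x := fun x => by
    have := (abs_le.1 (hb x)).1; simp [hψ_def]; linarith
  have hψ2G : ∀ x, ψ x ≤ 2 * G := fun x => by
    have := (abs_le.1 (hb x)).2; simp [hψ_def]; linarith
  have hψint : ∀ (κ : Measure α), IsProbabilityMeasure κ → Integrable ψ κ := fun κ hκ =>
    integrable_of_abs_le' hψm (fun x => by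
      rw [abs_of_nonneg (hψ0 x)]; exact hψ2G x)
  -- layer cake for both measures
  have hlc : ∀ (κ : Measure α), IsProbabilityMeasure κ →
      ∫ x, ψ x ∂κ = ∫ t in Set.Ioi (0:ℝ), (κ {a | t < ψ a}).toReal := fun κ hκ =>
    (hψint κ hκ).integral_eq_integral_meas_lt (Filter.Eventually.of_forall hψ0)
  -- the difference of the two survival functions
  have hsurv_meas : ∀ (κ : Measure α), IsProbabilityMeasure κ →
      Measurable (fun t : ℝ => (κ {a | t < ψ a}).toReal) := by
    intro κ hκ
    have : Antitone (fun t : ℝ => κ {a | t < ψ a}) := by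
      intro s t hst
      exact measure_mono (fun a ha => lt_of_le_of_lt hst ha)
    exact this.measurable.ennreal_toReal
  have hsurv_zero : ∀ (κ : Measure α), ∀ t : ℝ, 2 * G ≤ t → (κ {a | t < ψ a}).toReal = 0 := by
    intro κ t ht
    have : {a | t < ψ a} = ∅ := by
      ext a; simp only [Set.mem_setOf_eq, Set.mem_empty_iff_false, iff_false, not_lt]
      exact (hψ2G a).trans ht
    simp [this]
  have hsurv_le_one : ∀ (κ : Measure α), IsProbabilityMeasure κ → ∀ t : ℝ,
      (κ {a | t < ψ a}).toReal ≤ 1 := by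
    intro κ hκ t
    rw [← ENNReal.toReal_one]
    exact ENNReal.toReal_mono ENNReal.one_ne_top prob_le_one
  -- integrability of survival functions on (0, ∞)
  have hsurv_int : ∀ (κ : Measure α), IsProbabilityMeasure κ →
      Integrable (fun t : ℝ => (κ {a | t < ψ a}).toReal)
        (volume.restrict (Set.Ioi (0:ℝ))) := by
    intro κ hκ
    have hgint : Integrable ((Set.Ioc (0:ℝ) (2*G)).indicator (fun _ => (1:ℝ)))
        (volume.restrict (Set.Ioi (0:ℝ))) := by
      rw [integrable_indicator_iff measurableSet_Ioc]
      refine integrableOn_const (ne_of_lt ?_)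
      exact lt_of_le_of_lt (Measure.restrict_apply_le _ _) measure_Ioc_lt_top
    refine Integrable.mono' hgint (hsurv_meas κ hκ).aestronglyMeasurable ?_
    rw [MeasureTheory.ae_restrict_iff' measurableSet_Ioi]
    refine Filter.Eventually.of_forall fun t ht => ?_
    simp only [Set.mem_Ioi] at ht
    by_cases h2 : t ≤ 2 * G
    · rw [Set.indicator_of_mem (by exact ⟨ht, h2⟩)]
      rw [Real.norm_eq_abs, abs_of_nonneg ENNReal.toReal_nonneg]
      exact hsurv_le_one κ hκ t
    · rw [Set.indicator_of_notMem (by simp [Set.mem_Ioc]; intro _; linarith)]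
      rw [Real.norm_eq_abs, hsurv_zero κ t (by linarith)]
      simp
  -- put everything together
  have hsub : (∫ x, φ x ∂μ) - ∫ x, φ x ∂ν = (∫ x, ψ x ∂μ) - ∫ x, ψ x ∂ν := by
    have h1 : ∀ (κ : Measure α), IsProbabilityMeasure κ → ∫ x, ψ x ∂κ = (∫ x, φ x ∂κ) + G := by
      intro κ hκ
      rw [hψ_def]
      rw [integral_add (integrable_of_abs_le' hm hb) (integrable_const G)]
      simp
    rw [h1 μ inferInstance, h1 ν inferInstance]; ring
  rw [hsub, hlc μ inferInstance, hlc ν inferInstance,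
    ← integral_sub (hsurv_int μ inferInstance) (hsurv_int ν inferInstance)]
  have hbound : ∀ t ∈ Set.Ioi (0:ℝ),
      ‖(μ {a | t < ψ a}).toReal - (ν {a | t < ψ a}).toReal‖
        ≤ (Set.Ioc (0:ℝ) (2*G)).indicator (fun _ => ε) t := by
    intro t ht
    simp only [Set.mem_Ioi] at ht
    by_cases h2 : t ≤ 2 * G
    · rw [Set.indicator_of_mem (by exact ⟨ht, h2⟩)]
      rw [Real.norm_eq_abs]
      refine hd _ ?_
      have : {a | t < ψ a} = {a | t - G < φ a} := by
        ext a; simp only [Set.mem_setOf_eq, hψ_def]; constructor <;> intro <;> linarith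
      rw [this]
      exact measurableSet_lt measurable_const hm
    · rw [Set.indicator_of_notMem (by simp [Set.mem_Ioc]; intro _; linarith)]
      rw [Real.norm_eq_abs, hsurv_zero μ t (by linarith), hsurv_zero ν t (by linarith)]
      simp
  have hgint2 : Integrable ((Set.Ioc (0:ℝ) (2*G)).indicator (fun _ => ε))
      (volume.restrict (Set.Ioi (0:ℝ))) := by
    rw [integrable_indicator_iff measurableSet_Ioc]
    refine integrableOn_const (ne_of_lt ?_)
    exact lt_of_le_of_lt (Measure.restrict_apply_le _ _) measure_Ioc_lt_top
  calc |∫ t in Set.Ioi (0:ℝ), ((μ {a | t < ψ a}).toReal - (ν {a | t < ψ a}).toReal)|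
      = ‖∫ t in Set.Ioi (0:ℝ), ((μ {a | t < ψ a}).toReal - (ν {a | t < ψ a}).toReal)‖ :=
        (Real.norm_eq_abs _).symm
    _ ≤ ∫ t in Set.Ioi (0:ℝ), (Set.Ioc (0:ℝ) (2*G)).indicator (fun _ => ε) t := by
        refine norm_integral_le_of_norm_le hgint2 ?_
        rw [MeasureTheory.ae_restrict_iff' measurableSet_Ioi]
        exact Filter.Eventually.of_forall hbound
    _ = 2 * G * ε := by
        rw [integral_indicator measurableSet_Ioc]
        rw [Measure.restrict_restrict measurableSet_Ioc]
        have : Set.Ioc (0:ℝ) (2*G) ∩ Set.Ioi 0 = Set.Ioc (0:ℝ) (2*G) := by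
          ext t; simp only [Set.mem_inter_iff, Set.mem_Ioc, Set.mem_Ioi, and_iff_left_iff_imp]
          exact fun h => h.1
        rw [this, integral_const]
        simp only [MeasurableSet.univ, Measure.restrict_apply, Set.univ_inter, Real.volume_Ioc,
          smul_eq_mul, sub_zero]
        rw [measureReal_def, Measure.restrict_apply MeasurableSet.univ, Set.univ_inter, Real.volume_Ioc,
          sub_zero, ENNReal.toReal_ofReal (by positivity : (0:ℝ) ≤ 2*G)]

end CoupledBiasAux


namespace CoupledBiasAux2
variable {E U : Type*} [MeasurableSpace E] [MeasurableSpace U]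

/-- One-step kernel operator on functions. -/
noncomputable def tk (ξl : E → U → E) (μ : Measure U) (φ : E → ℝ) (x : E) : ℝ :=
  ∫ u, φ (ξl x u) ∂μ

variable {ξl : E → U → E} {μ : Measure U} [IsProbabilityMeasure μ]

lemma integrable_of_abs_le2 {α : Type*} [MeasurableSpace α] {ν : Measure α} [IsFiniteMeasure ν]
    {φ : α → ℝ} {B : ℝ} (hm : Measurable φ) (hb : ∀ x, |φ x| ≤ B) : Integrable φ ν :=
  (integrable_const B).mono' hm.aestronglyMeasurable
    (Filter.Eventually.of_forall fun x => by simpa using hb x)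

lemma tk_meas (hξ : Measurable (Function.uncurry ξl)) {φ : E → ℝ} (hφ : Measurable φ) :
    Measurable (tk ξl μ φ) := by
  have : StronglyMeasurable fun p : E × U => φ (Function.uncurry ξl p) :=
    (hφ.comp hξ).stronglyMeasurable
  exact this.integral_prod_right'.measurable

lemma tk_abs_le (hξ : Measurable (Function.uncurry ξl)) {φ : E → ℝ} {B : ℝ}
    (hb : ∀ x, |φ x| ≤ B) (x : E) : |tk ξl μ φ x| ≤ B := by
  have : |∫ u, φ (ξl x u) ∂μ| ≤ B := by
    have := norm_integral_le_of_norm_le (μ := μ) (f := fun u => φ (ξl x u)) (g := fun _ => B)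
      (integrable_const B) (Filter.Eventually.of_forall fun u => by simpa using hb (ξl x u))
    simpa using this
  exact this

lemma tk_sub (hξ : Measurable (Function.uncurry ξl)) {φ φ' : E → ℝ} {B B' : ℝ}
    (hφ : Measurable φ) (hb : ∀ x, |φ x| ≤ B) (hφ' : Measurable φ') (hb' : ∀ x, |φ' x| ≤ B')
    (x : E) : tk ξl μ (fun y => φ y - φ' y) x = tk ξl μ φ x - tk ξl μ φ' x := by
  unfold tk
  refine integral_sub ?_ ?_
  · exact integrable_of_abs_le2 (hφ.comp (hξ.comp (measurable_prodMk_left))) fun u => hb _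
  · exact integrable_of_abs_le2 (hφ'.comp (hξ.comp (measurable_prodMk_left))) fun u => hb' _

lemma tk_sub_const (hξ : Measurable (Function.uncurry ξl)) {φ : E → ℝ} {B : ℝ} (c : ℝ)
    (hφ : Measurable φ) (hb : ∀ x, |φ x| ≤ B) (x : E) :
    tk ξl μ (fun y => φ y - c) x = tk ξl μ φ x - c := by
  rw [tk_sub hξ hφ hb measurable_const (fun _ => le_refl |c|) x]
  have : tk ξl μ (fun _ => c) x = c := by unfold tk; simp
  rw [this]

/-- Measurability of the one-step kernel as a measure-valued map. -/
lemma meas_kernel (hξ : Measurable (Function.uncurry ξl)) [SFinite μ] :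
    Measurable (fun y => μ.map fun u => ξl y u) := by
  refine Measure.measurable_of_measurable_coe _ (fun s hs => ?_)
  have heq : ∀ y, (μ.map fun u => ξl y u) s = μ {u | (y, u) ∈ Function.uncurry ξl ⁻¹' s} := by
    intro y
    rw [Measure.map_apply (show Measurable (fun u => ξl y u) from hξ.comp measurable_prodMk_left) hs]
    rfl
  simp only [heq]
  exact measurable_measure_prodMk_left (hξ hs)

lemma foo : True := trivial

lemma kIterM_isProb (hξ : Measurable (Function.uncurry ξl)) (x : E) (n : ℕ) :
    IsProbabilityMeasure (kIterM ξl μ n x) := by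
  induction n with
  | zero => exact Measure.dirac.isProbabilityMeasure
  | succ n ih =>
    show IsProbabilityMeasure ((kIterM ξl μ n x).bind fun y => μ.map fun u => ξl y u)
    constructor
    rw [Measure.bind_apply MeasurableSet.univ (meas_kernel hξ).aemeasurable]
    have : ∀ y, (μ.map fun u => ξl y u) Set.univ = 1 := by
      intro y
      haveI : IsProbabilityMeasure (μ.map fun u => ξl y u) :=
        Measure.isProbabilityMeasure_map (hξ.comp measurable_prodMk_left).aemeasurable
      exact measure_univ
    simp only [this]
    haveI := ih
    simp

/-- Integral against the `n`-step marginal equals the `n`-fold kernel operator. -/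
lemma integral_kIterM (hξ : Measurable (Function.uncurry ξl)) (x : E) :
    ∀ (n : ℕ) (φ : E → ℝ) (B : ℝ), Measurable φ → (∀ y, |φ y| ≤ B) →
    ∫ y, φ y ∂(kIterM ξl μ n x) = (tk ξl μ)^[n] φ x := by
  intro n
  induction n generalizing x with
  | zero =>
    intro φ B hφ hb
    show ∫ y, φ y ∂(Measure.dirac x) = φ x
    exact integral_dirac' φ x hφ.stronglyMeasurable
  | succ n ih =>
    intro φ B hφ hb
    show ∫ y, φ y ∂((kIterM ξl μ n x).bind fun y => μ.map fun u => ξl y u)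
      = (tk ξl μ)^[n+1] φ x
    haveI := kIterM_isProb (μ := μ) hξ x n
    rw [CoupledBiasAux.integral_bind_of_bounds _ _ (meas_kernel hξ)
      (fun y => Measure.isProbabilityMeasure_map
        (show Measurable (fun u => ξl y u) from hξ.comp measurable_prodMk_left).aemeasurable)
      hφ hb]
    have heq : ∀ y, ∫ z, φ z ∂(μ.map fun u => ξl y u) = tk ξl μ φ y := by
      intro y
      rw [integral_map (show Measurable (fun u => ξl y u) from
        hξ.comp measurable_prodMk_left).aemeasurable hφ.aestronglyMeasurable]
      rfl
    rw [integral_congr_ae (Filter.Eventually.of_forall heq)]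
    rw [ih x (tk ξl μ φ) B (tk_meas hξ hφ) (tk_abs_le hξ hb)]
    rw [Function.iterate_succ_apply]

/-- The iterated kernel stays in an invariant set. -/
lemma kIterM_ae_mem (hξ : Measurable (Function.uncurry ξl)) {X : Set E}
    (hX : MeasurableSet X) (hmaps : ∀ x ∈ X, ∀ u, ξl x u ∈ X) {x : E} (hx : x ∈ X) (n : ℕ) :
    kIterM ξl μ n x Xᶜ = 0 := by
  induction n with
  | zero =>
    show Measure.dirac x Xᶜ = 0
    rw [Measure.dirac_apply' x hX.compl]
    simp [hx]
  | succ n ih =>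
    show ((kIterM ξl μ n x).bind fun y => μ.map fun u => ξl y u) Xᶜ = 0
    rw [Measure.bind_apply hX.compl (meas_kernel hξ).aemeasurable]
    have h0 : ∀ᵐ y ∂(kIterM ξl μ n x), (μ.map fun u => ξl y u) Xᶜ = 0 := by
      have hmem : ∀ᵐ y ∂(kIterM ξl μ n x), y ∈ X := by
        rw [MeasureTheory.ae_iff]
        exact ih
      filter_upwards [hmem] with y hy
      rw [Measure.map_apply (show Measurable (fun u => ξl y u) from
        hξ.comp measurable_prodMk_left) hX.compl]
      have : (fun u => ξl y u) ⁻¹' Xᶜ = ∅ := by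
        ext u; simp [hmaps y hy u]
      simp [this]
    rw [lintegral_congr_ae h0]
    simp

/-- Sup-norm over the invariant set is preserved by the iterated kernel operator. -/
lemma tk_iter_boundX (hξ : Measurable (Function.uncurry ξl)) {X : Set E}
    (hmaps : ∀ x ∈ X, ∀ u, ξl x u ∈ X) {φ : E → ℝ} {G : ℝ}
    (hb : ∀ y ∈ X, |φ y| ≤ G) {x : E} (hx : x ∈ X) :
    |tk ξl μ φ x| ≤ G := by
  have := norm_integral_le_of_norm_le (μ := μ) (f := fun u => φ (ξl x u)) (g := fun _ => G)
    (integrable_const G) (Filter.Eventually.of_forall fun u => by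
      simpa using hb _ (hmaps x hx u))
  simpa [tk] using this

end CoupledBiasAux2


namespace CoupledBiasAux3

/-- The chain as a function of finitely many noise variables. -/
noncomputable def chainFun {E U : Type*} (ξ : E → U → E) (x : E) : (n : ℕ) → (Fin n → U) → E
  | 0, _ => x
  | n + 1, v => ξ (chainFun ξ x n (fun i => v i.castSucc)) (v (Fin.last n))

variable {E U Ω : Type*} [MeasurableSpace E] [MeasurableSpace U] [MeasurableSpace Ω]

lemma chainFun_measurable {ξ : E → U → E} (hξ : Measurable (Function.uncurry ξ)) (x : E) :
    ∀ n, Measurable (chainFun ξ x n) := by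
  intro n
  induction n with
  | zero => exact measurable_const
  | succ n ih =>
    show Measurable fun v : Fin (n+1) → U =>
      ξ (chainFun ξ x n (fun i => v i.castSucc)) (v (Fin.last n))
    have h1 : Measurable fun v : Fin (n+1) → U => (fun i : Fin n => v i.castSucc) :=
      measurable_pi_lambda _ (fun i => measurable_pi_apply _)
    exact hξ.comp ((ih.comp h1).prodMk (measurable_pi_apply _))

lemma mapChain_eq_chainFun {ξ : E → U → E} {V : ℕ → Ω → U} {x : E} :
    ∀ n ω, mapChain ξ V x n ω = chainFun ξ x n (fun i : Fin n => V (i + 1) ω) := by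
  intro n
  induction n with
  | zero => intro ω; rfl
  | succ n ih =>
    intro ω
    show ξ (mapChain ξ V x n ω) (V (n + 1) ω) = _
    rw [ih ω]
    rfl

lemma mapChain_measurable {ξ : E → U → E} (hξ : Measurable (Function.uncurry ξ))
    {V : ℕ → Ω → U} (hV : ∀ n, Measurable (V n)) (x : E) (n : ℕ) :
    Measurable (mapChain ξ V x n) := by
  induction n with
  | zero => exact measurable_const
  | succ n ih => exact hξ.comp (ih.prodMk (hV (n+1)))

/-- The chain up to time `n` is independent of the noise at time `n+1`. -/
lemma mapChain_indep {P : Measure Ω} {ξ : E → U → E} (hξ : Measurable (Function.uncurry ξ))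
    {V : ℕ → Ω → U} (hV : ∀ n, Measurable (V n))
    (hiid : iIndepFun V P) (x : E) (n : ℕ) :
    IndepFun (mapChain ξ V x n) (V (n + 1)) P := by
  classical
  set S : Finset ℕ := Finset.Icc 1 n with hS
  set T : Finset ℕ := {n + 1} with hT
  have hST : Disjoint S T := by
    simp only [hS, hT, Finset.disjoint_singleton_right, Finset.mem_Icc]
    omega
  have hbase : IndepFun (fun a (i : S) => V i a) (fun a (i : T) => V i a) P :=
    hiid.indepFun_finset S T hST hV
  have hmem : ∀ i : Fin n, (i : ℕ) + 1 ∈ S := by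
    intro i; simp only [hS, Finset.mem_Icc]; omega
  have hmem' : n + 1 ∈ T := by simp [hT]
  have hmap1 : Measurable fun (g : S → U) => chainFun ξ x n (fun i : Fin n => g ⟨i + 1, hmem i⟩) :=
    (chainFun_measurable hξ x n).comp
      (measurable_pi_lambda _ (fun i => measurable_pi_apply _))
  have hmap2 : Measurable fun (g : T → U) => g ⟨n + 1, hmem'⟩ := measurable_pi_apply _
  have := hbase.comp hmap1 hmap2
  have heq1 : (fun (g : S → U) => chainFun ξ x n (fun i : Fin n => g ⟨i + 1, hmem i⟩))
      ∘ (fun a (i : S) => V i a) = mapChain ξ V x n := by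
    funext ω
    simp only [Function.comp_apply]
    rw [mapChain_eq_chainFun]
  have heq2 : (fun (g : T → U) => g ⟨n + 1, hmem'⟩) ∘ (fun a (i : T) => V i a) = V (n + 1) := rfl
  rwa [heq1, heq2] at this

variable {P : Measure Ω} [IsProbabilityMeasure P] {μ : Measure U} [IsProbabilityMeasure μ]

lemma integral_comp_indep {ξl : E → U → E} (hξ : Measurable (Function.uncurry ξl))
    {X : Ω → E} {Y : Ω → U} (hX : Measurable X) (hY : Measurable Y)
    (hXY : IndepFun X Y P) (hYlaw : P.map Y = μ)
    {φ : E → ℝ} {B : ℝ} (hφ : Measurable φ) (hb : ∀ y, |φ y| ≤ B) :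
    ∫ ω, φ (ξl (X ω) (Y ω)) ∂P = ∫ ω, CoupledBiasAux2.tk ξl μ φ (X ω) ∂P := by
  have hpair : Measurable fun ω => (X ω, Y ω) := hX.prodMk hY
  have hmapeq : P.map (fun ω => (X ω, Y ω)) = (P.map X).prod (P.map Y) :=
    (indepFun_iff_map_prod_eq_prod_map_map hX.aemeasurable hY.aemeasurable).1 hXY
  haveI : IsProbabilityMeasure (P.map X) := Measure.isProbabilityMeasure_map hX.aemeasurable
  haveI : IsProbabilityMeasure (P.map Y) := Measure.isProbabilityMeasure_map hY.aemeasurable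
  set f : E × U → ℝ := fun p => φ (ξl p.1 p.2) with hf_def
  have hfm : Measurable f := hφ.comp hξ
  have h1 : ∫ ω, φ (ξl (X ω) (Y ω)) ∂P = ∫ p, f p ∂((P.map X).prod (P.map Y)) := by
    rw [← hmapeq]
    exact (integral_map hpair.aemeasurable hfm.aestronglyMeasurable).symm
  have h3 : Integrable f ((P.map X).prod (P.map Y)) :=
    CoupledBiasAux2.integrable_of_abs_le2 hfm (fun p => hb _)
  have h4 : ∫ p, f p ∂((P.map X).prod (P.map Y)) = ∫ x, ∫ y, f (x, y) ∂(P.map Y) ∂(P.map X) :=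
    integral_prod f h3
  have h2 : ∀ x, ∫ y, f (x, y) ∂(P.map Y) = CoupledBiasAux2.tk ξl μ φ x := by
    intro x
    rw [hYlaw]
    rfl
  rw [h1, h4, integral_congr_ae (Filter.Eventually.of_forall h2)]
  exact integral_map hX.aemeasurable (CoupledBiasAux2.tk_meas hξ hφ).aestronglyMeasurable

lemma integral_mapChain {ξl : E → U → E} (hξ : Measurable (Function.uncurry ξl))
    {V : ℕ → Ω → U} (hV : ∀ n, Measurable (V n))
    (hiid : iIndepFun V P)
    (hVlaw : ∀ n, P.map (V n) = μ) (x : E) :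
    ∀ (n : ℕ) (φ : E → ℝ) (B : ℝ), Measurable φ → (∀ y, |φ y| ≤ B) →
    ∫ ω, φ (mapChain ξl V x n ω) ∂P = (CoupledBiasAux2.tk ξl μ)^[n] φ x := by
  intro n
  induction n with
  | zero =>
    intro φ B hφ hb
    show ∫ _ω, φ x ∂P = φ x
    simp
  | succ n ih =>
    intro φ B hφ hb
    show ∫ ω, φ (ξl (mapChain ξl V x n ω) (V (n+1) ω)) ∂P = _
    rw [integral_comp_indep hξ (mapChain_measurable hξ hV x n) (hV (n+1))
      (mapChain_indep hξ hV hiid x n) (hVlaw (n+1)) hφ hb]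
    rw [ih (CoupledBiasAux2.tk ξl μ φ) B (CoupledBiasAux2.tk_meas hξ hφ)
      (CoupledBiasAux2.tk_abs_le hξ hb)]
    rw [Function.iterate_succ_apply]

end CoupledBiasAux3
namespace CoupledBiasAux2
variable {E U : Type*} [MeasurableSpace E] [MeasurableSpace U]
variable {ξl : E → U → E} {μ : Measure U} [IsProbabilityMeasure μ]

lemma tk_iter_meas_bound (hξ : Measurable (Function.uncurry ξl)) :
    ∀ (n : ℕ) (φ : E → ℝ) (B : ℝ), Measurable φ → (∀ x, |φ x| ≤ B) →
      Measurable ((tk ξl μ)^[n] φ) ∧ ∀ x, |((tk ξl μ)^[n] φ) x| ≤ B := by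
  intro n
  induction n with
  | zero => intro φ B hφ hb; simpa using ⟨hφ, hb⟩
  | succ n ih =>
    intro φ B hφ hb
    rw [Function.iterate_succ_apply]
    exact ih (tk ξl μ φ) B (tk_meas hξ hφ) (tk_abs_le hξ hb)

lemma tk_congr {f f' : E → ℝ} (hff' : ∀ z, f z = f' z) (y : E) :
    tk ξl μ f y = tk ξl μ f' y :=
  integral_congr_ae (Filter.Eventually.of_forall fun u => by simp only []; rw [hff'])

lemma tk_finset_sum (hξ : Measurable (Function.uncurry ξl)) {ι : Type*} (s : Finset ι)
    (f : ι → E → ℝ) (Bf : ι → ℝ) (hf : ∀ i ∈ s, Measurable (f i))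
    (hb : ∀ i ∈ s, ∀ x, |f i x| ≤ Bf i) (y : E) :
    tk ξl μ (fun z => ∑ i ∈ s, f i z) y = ∑ i ∈ s, tk ξl μ (f i) y := by
  unfold tk
  rw [integral_finset_sum]
  intro i hi
  exact integrable_of_abs_le2 ((hf i hi).comp (hξ.comp measurable_prodMk_left))
    (fun u => hb i hi _)

end CoupledBiasAux2

end Helpers
set_option maxHeartbeats 1600000 in
open CoupledBiasAux CoupledBiasAux2 CoupledBiasAux3 in
/-- Proposition 1 of the paper: under (A1)–(A3) the coupled MCMC
estimator of `[π_l − π_{l−1}](φ)` has bias `O(h_l^β / N_l)`. -/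
theorem coupled_mcmc_bias
    {d : ℕ} {U Ω : Type*} [MeasurableSpace U] [MeasurableSpace Ω]
    (μ : Measure U) [IsProbabilityMeasure μ]
    (P : Measure Ω) [IsProbabilityMeasure P]
    (X : Set (EuclideanSpace ℝ (Fin d))) (hXcomp : IsCompact X)
    -- the hierarchy of iterated random maps and target measures
    (ξ : ℕ → EuclideanSpace ℝ (Fin d) → U → EuclideanSpace ℝ (Fin d))
    (hξmeas : ∀ l, Measurable (Function.uncurry (ξ l)))
    (hξmaps : ∀ l, ∀ x ∈ X, ∀ u, ξ l x u ∈ X)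
    (π : ℕ → Measure (EuclideanSpace ℝ (Fin d))) (hπprob : ∀ l, IsProbabilityMeasure (π l))
    (hπinv : ∀ l, (π l).bind (fun x => μ.map fun u => ξ l x u) = π l)
    (h : ℕ → ℝ) (hh : ∀ l, h l ∈ Set.Ioo (0 : ℝ) 1) (hhdec : StrictAnti h)
    (C ρ β : ℝ) (hC : 0 ≤ C) (hρ : ρ ∈ Set.Ioo (0 : ℝ) 1) (hβ : 0 < β)
    -- (A1) uniform-in-`l` geometric ergodicity in total variation
    (hA1 : ∀ l : ℕ, ∀ n : ℕ, 1 ≤ n → ∀ x ∈ X, ∀ s : Set (EuclideanSpace ℝ (Fin d)),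
      MeasurableSet s → |((kIterM (ξ l) μ n x) s).toReal - ((π l) s).toReal| ≤ C * ρ ^ n)
    -- (A2) Lipschitz-smoothing of the kernels
    (hA2 : ∀ l : ℕ, ∀ (φ : EuclideanSpace ℝ (Fin d) → ℝ) (B L : ℝ), Measurable φ →
      (∀ x, |φ x| ≤ B) → (∀ x y, |φ x - φ y| ≤ L * ‖x - y‖) →
      ∀ x ∈ X, ∀ y ∈ X,
        |(∫ u, φ (ξ l x u) ∂μ) - ∫ u, φ (ξ l y u) ∂μ| ≤ C * (max B L) * ‖x - y‖)
    -- (A3) perturbation bounds between consecutive levels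
    (hA3a : ∀ l : ℕ, 1 ≤ l → ∀ (φ : EuclideanSpace ℝ (Fin d) → ℝ) (B : ℝ), Measurable φ →
      (∀ x, |φ x| ≤ B) →
      |(∫ y, φ y ∂(π l)) - ∫ y, φ y ∂(π (l - 1))| ≤ C * B * h l ^ β)
    (hA3b : ∀ l : ℕ, 1 ≤ l → ∀ (φ : EuclideanSpace ℝ (Fin d) → ℝ) (B : ℝ), Measurable φ →
      (∀ x, |φ x| ≤ B) → ∀ x ∈ X,
      |(∫ u, φ (ξ l x u) ∂μ) - ∫ u, φ (ξ (l - 1) x u) ∂μ| ≤ C * B * h l ^ β)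
    -- common i.i.d. driving noise and common starting point
    (V : ℕ → Ω → U) (hVmeas : ∀ n, Measurable (V n))
    (hViid : iIndepFun V P)
    (hVlaw : ∀ n, P.map (V n) = μ)
    (x₀ : EuclideanSpace ℝ (Fin d)) (hx₀ : x₀ ∈ X) :
    ∃ C' : ℝ, 0 ≤ C' ∧
      ∀ l : ℕ, 1 ≤ l → ∀ N : ℕ, 1 ≤ N →
      ∀ (φ : EuclideanSpace ℝ (Fin d) → ℝ) (B L : ℝ), Measurable φ →
        (∀ x, |φ x| ≤ B) → (∀ x y, |φ x - φ y| ≤ L * ‖x - y‖) →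
        |(∫ ω, (N : ℝ)⁻¹ * ∑ n ∈ Finset.Icc 1 N,
            (φ (mapChain (ξ l) V x₀ n ω) - φ (mapChain (ξ (l - 1)) V x₀ n ω)) ∂P)
          - ((∫ y, φ y ∂(π l)) - ∫ y, φ y ∂(π (l - 1)))|
        ≤ C' * (max B L) * h l ^ β / N := by
  classical
  obtain ⟨hρ0, hρ1⟩ := hρ
  have hXmeas : MeasurableSet X := hXcomp.isClosed.measurableSet
  set M : ℝ := max 1 C with hM_def
  have hM1 : (1:ℝ) ≤ M := le_max_left _ _
  have hMC : C ≤ M := le_max_right _ _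
  have hM0 : (0:ℝ) < M := lt_of_lt_of_le one_pos hM1
  have h1ρ : (0:ℝ) < 1 - ρ := by linarith
  refine ⟨4 * C * M^2 * (2*M+1) * ((1-ρ)⁻¹)^2, by positivity, ?_⟩
  intro l hl N hN φ B L hφm hφB hφL
  haveI : ∀ l', IsProbabilityMeasure (π l') := hπprob
  have hB0 : (0:ℝ) ≤ B := (abs_nonneg _).trans (hφB x₀)
  have hhl0 : 0 < h l := (hh l).1
  have hhβ : 0 < h l ^ β := Real.rpow_pos_of_pos hhl0 β
  -- the function-level Markov semigroups at levels l and l-1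
  set T1 : (EuclideanSpace ℝ (Fin d) → ℝ) → EuclideanSpace ℝ (Fin d) → ℝ := tk (ξ l) μ with hT1
  set T0 : (EuclideanSpace ℝ (Fin d) → ℝ) → EuclideanSpace ℝ (Fin d) → ℝ :=
    tk (ξ (l-1)) μ with hT0
  set Iπ1 : ℝ := ∫ y, φ y ∂(π l) with hIπ1def
  set Iπ0 : ℝ := ∫ y, φ y ∂(π (l-1)) with hIπ0def
  -- (A1) in functional form
  have ha1fun : ∀ l' n, 1 ≤ n → ∀ x ∈ X, ∀ (φ' : EuclideanSpace ℝ (Fin d) → ℝ) (B' : ℝ),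
      0 ≤ B' → Measurable φ' → (∀ y, |φ' y| ≤ B') →
      |((tk (ξ l') μ)^[n] φ') x - ∫ y, φ' y ∂(π l')| ≤ 2 * B' * (C * ρ^n) := by
    intro l' n hn x hx φ' B' hB' hφ' hb'
    haveI := kIterM_isProb (μ := μ) (hξmeas l') x n
    rw [← integral_kIterM (μ := μ) (hξmeas l') x n φ' B' hφ' hb']
    exact tv_integral_bound hB' (fun s hs => hA1 l' n hn x hx s hs) hφ' hb'
  -- the targets are concentrated on X
  have hπX : ∀ l', (π l') Xᶜ = 0 := by
    intro l'
    have h1 : ∀ n : ℕ, 1 ≤ n → ((π l') Xᶜ).toReal ≤ C * ρ^n := by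
      intro n hn
      have h2 : (kIterM (ξ l') μ n x₀) Xᶜ = 0 :=
        kIterM_ae_mem (μ := μ) (hξmeas l') hXmeas (hξmaps l') hx₀ n
      have h6 := hA1 l' n hn x₀ hx₀ Xᶜ hXmeas.compl
      rw [h2] at h6
      have h7 : |(0:ℝ) - ((π l') Xᶜ).toReal| ≤ C * ρ^n := by simpa using h6
      rw [abs_sub_comm, sub_zero, abs_of_nonneg ENNReal.toReal_nonneg] at h7
      exact h7
    have h3 : ((π l') Xᶜ).toReal ≤ 0 := by
      have hlim : Filter.Tendsto (fun n : ℕ => C * ρ^n) Filter.atTop (nhds 0) := by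
        simpa using (tendsto_pow_atTop_nhds_zero_of_lt_one hρ0.le hρ1).const_mul C
      exact ge_of_tendsto hlim (Filter.eventually_atTop.2 ⟨1, fun n hn => h1 n hn⟩)
    have h4 : ((π l') Xᶜ).toReal = 0 := le_antisymm h3 ENNReal.toReal_nonneg
    have h5 := (ENNReal.toReal_eq_zero_iff _).1 h4
    rcases h5 with h5 | h5
    · exact h5
    · exact absurd h5 (measure_ne_top _ _)
  have hπaeX : ∀ l', ∀ᵐ y ∂(π l'), y ∈ X := by
    intro l'
    rw [MeasureTheory.ae_iff]
    exact hπX l'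
  have hkaeX : ∀ l' n, ∀ᵐ y ∂(kIterM (ξ l') μ n x₀), y ∈ X := by
    intro l' n
    rw [MeasureTheory.ae_iff]
    exact kIterM_ae_mem (μ := μ) (hξmeas l') hXmeas (hξmaps l') hx₀ n
  -- (A1) in functional form, for functions only bounded on X
  have ha1funX : ∀ l' n, 1 ≤ n → ∀ (φ' : EuclideanSpace ℝ (Fin d) → ℝ) (G Bg : ℝ),
      0 ≤ G → Measurable φ' → (∀ y, |φ' y| ≤ Bg) → (∀ y ∈ X, |φ' y| ≤ G) →
      |((tk (ξ l') μ)^[n] φ') x₀ - ∫ y, φ' y ∂(π l')| ≤ 2 * G * (C * ρ^n) := by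
    intro l' n hn φ' G Bg hG hφ' hbg hbX
    haveI := kIterM_isProb (μ := μ) (hξmeas l') x₀ n
    set φ'' : EuclideanSpace ℝ (Fin d) → ℝ := X.indicator φ' with hφ''
    have hφ''m : Measurable φ'' := hφ'.indicator hXmeas
    have hφ''b : ∀ y, |φ'' y| ≤ G := by
      intro y
      by_cases hy : y ∈ X
      · rw [hφ'', Set.indicator_of_mem hy]; exact hbX y hy
      · rw [hφ'', Set.indicator_of_notMem hy]; simpa using hG
    have he1 : ∫ y, φ' y ∂(kIterM (ξ l') μ n x₀) = ∫ y, φ'' y ∂(kIterM (ξ l') μ n x₀) := by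
      refine integral_congr_ae ?_
      filter_upwards [hkaeX l' n] with y hy
      rw [hφ'', Set.indicator_of_mem hy]
    have he2 : ∫ y, φ' y ∂(π l') = ∫ y, φ'' y ∂(π l') := by
      refine integral_congr_ae ?_
      filter_upwards [hπaeX l'] with y hy
      rw [hφ'', Set.indicator_of_mem hy]
    rw [← integral_kIterM (μ := μ) (hξmeas l') x₀ n φ' Bg hφ' hbg, he1, he2]
    exact tv_integral_bound hG (fun s hs => hA1 l' n hn x₀ hx₀ s hs) hφ''m hφ''b
  -- sup bound over X for iterated kernels started in X
  have hiterX : ∀ l' k (φ' : EuclideanSpace ℝ (Fin d) → ℝ) (G Bg : ℝ),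
      Measurable φ' → (∀ y, |φ' y| ≤ Bg) → (∀ y ∈ X, |φ' y| ≤ G) →
      |((tk (ξ l') μ)^[k] φ') x₀| ≤ G := by
    intro l' k φ' G Bg hφ' hbg hbX
    haveI := kIterM_isProb (μ := μ) (hξmeas l') x₀ k
    rw [← integral_kIterM (μ := μ) (hξmeas l') x₀ k φ' Bg hφ' hbg]
    refine abs_integral_le ?_
    filter_upwards [hkaeX l' k] with y hy
    exact hbX y hy
  have hπbound : ∀ l' (φ' : EuclideanSpace ℝ (Fin d) → ℝ) (G : ℝ),
      (∀ y ∈ X, |φ' y| ≤ G) → |∫ y, φ' y ∂(π l')| ≤ G := by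
    intro l' φ' G hbX
    refine abs_integral_le ?_
    filter_upwards [hπaeX l'] with y hy
    exact hbX y hy
  -- STAGE2
  have hIπ1b : |Iπ1| ≤ B := hπbound l φ B (fun y _ => hφB y)
  set ψ : ℕ → EuclideanSpace ℝ (Fin d) → ℝ := fun m y => (T1^[m] φ) y - Iπ1 with hψdef
  have hf1 : ∀ m, Measurable (T1^[m] φ) ∧ ∀ y, |(T1^[m] φ) y| ≤ B :=
    fun m => tk_iter_meas_bound (hξmeas l) m φ B hφm hφB
  have hf0 : ∀ m, Measurable (T0^[m] φ) ∧ ∀ y, |(T0^[m] φ) y| ≤ B :=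
    fun m => tk_iter_meas_bound (hξmeas (l-1)) m φ B hφm hφB
  have hψmeas : ∀ m, Measurable (ψ m) := fun m => (hf1 m).1.sub measurable_const
  have hψb : ∀ m y, |ψ m y| ≤ 2*B := by
    intro m y
    have h1 := (hf1 m).2 y
    calc |ψ m y| ≤ |(T1^[m] φ) y| + |Iπ1| := abs_sub _ _
      _ ≤ 2*B := by linarith
  have hψX : ∀ m, ∀ y ∈ X, |ψ m y| ≤ 2*B*(M*ρ^m) := by
    intro m y hy
    rcases Nat.eq_zero_or_pos m with hm|hm
    · subst hm
      simp only [pow_zero, mul_one]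
      have := hψb 0 y
      nlinarith
    · have h1 := ha1fun l m hm y hy φ B hB0 hφm hφB
      have hρm : (0:ℝ) ≤ ρ^m := by positivity
      refine le_trans (by exact h1) ?_
      calc 2*B*(C*ρ^m) = (2*B*ρ^m)*C := by ring
        _ ≤ (2*B*ρ^m)*M := mul_le_mul_of_nonneg_left hMC
            (mul_nonneg (mul_nonneg (by norm_num) hB0) hρm)
        _ = 2*B*(M*ρ^m) := by ring
  set g : ℕ → EuclideanSpace ℝ (Fin d) → ℝ := fun m y => T1 (ψ m) y - T0 (ψ m) y with hgdef
  have hgm : ∀ m, Measurable (g m) :=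
    fun m => (tk_meas (hξmeas l) (hψmeas m)).sub (tk_meas (hξmeas (l-1)) (hψmeas m))
  have hgb : ∀ m y, |g m y| ≤ 4*B := by
    intro m y
    have h1 := tk_abs_le (μ := μ) (hξmeas l) (hψb m) y
    have h2 := tk_abs_le (μ := μ) (hξmeas (l-1)) (hψb m) y
    calc |g m y| ≤ |T1 (ψ m) y| + |T0 (ψ m) y| := abs_sub _ _
      _ ≤ 4*B := by linarith
  set Q : ℝ := 4*B*C*M^2 * h l ^ β with hQdef
  have hQ0 : 0 ≤ Q := by positivity
  have hgX : ∀ m, ∀ y ∈ X, |g m y| ≤ Q * ρ^m := by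
    intro m y hy
    have hρm : (0:ℝ) ≤ ρ^m := by positivity
    set G : ℝ := 2*B*(M*ρ^m) with hGdef
    have hG0 : 0 ≤ G := by positivity
    set ψ' : EuclideanSpace ℝ (Fin d) → ℝ := X.indicator (ψ m) with hψ'def
    have hψ'm : Measurable ψ' := (hψmeas m).indicator hXmeas
    have hψ'b : ∀ z, |ψ' z| ≤ G := by
      intro z
      by_cases hz : z ∈ X
      · rw [hψ'def]; rw [Set.indicator_of_mem hz]; exact hψX m z hz
      · rw [hψ'def]; rw [Set.indicator_of_notMem hz]; simpa using hG0
    have h3b := hA3b l hl ψ' G hψ'm hψ'b y hy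
    have he1 : (∫ u, ψ' (ξ l y u) ∂μ) = T1 (ψ m) y :=
      integral_congr_ae (Filter.Eventually.of_forall fun u => by
        simp only []
        rw [hψ'def, Set.indicator_of_mem (hξmaps l y hy u)])
    have he0 : (∫ u, ψ' (ξ (l-1) y u) ∂μ) = T0 (ψ m) y :=
      integral_congr_ae (Filter.Eventually.of_forall fun u => by
        simp only []
        rw [hψ'def, Set.indicator_of_mem (hξmaps (l-1) y hy u)])
    rw [he1, he0] at h3b
    have : |g m y| ≤ C * G * h l ^ β := h3b
    refine this.trans ?_
    rw [hGdef, hQdef]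
    have hM2 : M ≤ 2*M^2 := by nlinarith [mul_nonneg (sub_nonneg.2 hM1) hM0.le, sq_nonneg M]
    calc C*(2*B*(M*ρ^m))*h l ^ β = (2*B*C*ρ^m*h l ^ β)*M := by ring
      _ ≤ (2*B*C*ρ^m*h l ^ β)*(2*M^2) := mul_le_mul_of_nonneg_left hM2
          (by positivity)
      _ = 4*B*C*M^2*h l ^ β*ρ^m := by ring
  set b : ℕ → ℕ → ℝ := fun k m => (T0^[k] (g m)) x₀ with hbdef
  set βs : ℕ → ℝ := fun m => ∫ y, g m y ∂(π (l-1)) with hβsdef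
  have hbabs : ∀ k m, |b k m| ≤ Q * ρ^m := fun k m =>
    hiterX (l-1) k (g m) (Q*ρ^m) (4*B) (hgm m) (fun y => hgb m y) (hgX m)
  have hβabs : ∀ m, |βs m| ≤ Q * ρ^m := fun m => hπbound (l-1) (g m) _ (hgX m)
  have hbβ : ∀ k m, |b k m - βs m| ≤ 2*Q*M * (ρ^m * ρ^k) := by
    intro k m
    have hρm : (0:ℝ) ≤ ρ^m := by positivity
    have hρk : (0:ℝ) ≤ ρ^k := by positivity
    rcases Nat.eq_zero_or_pos k with hk|hk
    · subst hk
      simp only [pow_zero, mul_one]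
      have h1 := hbabs 0 m
      have h2 := hβabs m
      have h3 : |b 0 m - βs m| ≤ |b 0 m| + |βs m| := abs_sub _ _
      nlinarith [mul_nonneg (sub_nonneg.2 hM1) (mul_nonneg hQ0 hρm)]
    · have h1 := ha1funX (l-1) k hk (g m) (Q*ρ^m) (4*B)
        (mul_nonneg hQ0 hρm) (hgm m) (fun y => hgb m y) (hgX m)
      refine le_trans (by exact h1) ?_
      calc 2*(Q*ρ^m)*(C*ρ^k) = (2*Q*(ρ^m*ρ^k))*C := by ring
        _ ≤ (2*Q*(ρ^m*ρ^k))*M := mul_le_mul_of_nonneg_left hMC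
            (mul_nonneg (mul_nonneg (by norm_num) hQ0) (mul_nonneg hρm hρk))
        _ = 2*Q*M*(ρ^m*ρ^k) := by ring
  -- telescoping identity
  have htel : ∀ n (y : EuclideanSpace ℝ (Fin d)), (T1^[n] φ) y - (T0^[n] φ) y
      = ∑ k ∈ Finset.range n, (T0^[k] (g (n-1-k))) y := by
    intro n
    induction n with
    | zero => intro y; simp
    | succ n ih =>
      intro y
      have e1 : (T1^[n+1] φ) y = T1 (T1^[n] φ) y := by rw [Function.iterate_succ_apply']
      have e0 : (T0^[n+1] φ) y = T0 (T0^[n] φ) y := by rw [Function.iterate_succ_apply']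
      have hgn : g n y = T1 (T1^[n] φ) y - T0 (T1^[n] φ) y := by
        have hψeq : ψ n = fun z => (T1^[n] φ) z - Iπ1 := rfl
        have c1 : T1 (ψ n) y = T1 (T1^[n] φ) y - Iπ1 := by
          rw [hψeq]; exact tk_sub_const (hξmeas l) Iπ1 (hf1 n).1 (hf1 n).2 y
        have c0 : T0 (ψ n) y = T0 (T1^[n] φ) y - Iπ1 := by
          rw [hψeq]; exact tk_sub_const (hξmeas (l-1)) Iπ1 (hf1 n).1 (hf1 n).2 y
        rw [hgdef]
        simp only []
        rw [c1, c0]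
        ring
      have hT0diff : T0 (T1^[n] φ) y - T0 (T0^[n] φ) y
          = ∑ k ∈ Finset.range n, (T0^[k+1] (g (n-1-k))) y := by
        rw [← tk_sub (hξmeas (l-1)) (hf1 n).1 (hf1 n).2 (hf0 n).1 (hf0 n).2 y]
        have heq2 : tk (ξ (l-1)) μ (fun z => (T1^[n] φ) z - (T0^[n] φ) z) y
            = tk (ξ (l-1)) μ (fun z => ∑ k ∈ Finset.range n, (T0^[k] (g (n-1-k))) z) y :=
          tk_congr (fun z => ih z) y
        rw [heq2]
        rw [tk_finset_sum (hξmeas (l-1)) (Finset.range n)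
          (fun k => T0^[k] (g (n-1-k))) (fun _ => 4*B)
          (fun k _ => (tk_iter_meas_bound (hξmeas (l-1)) k (g _) (4*B) (hgm _)
            (fun y' => hgb _ y')).1)
          (fun k _ y' => (tk_iter_meas_bound (hξmeas (l-1)) k (g _) (4*B) (hgm _)
            (fun y'' => hgb _ y'')).2 y') y]
        refine Finset.sum_congr rfl fun k _ => ?_
        rw [Function.iterate_succ_apply']
      calc (T1^[n+1] φ) y - (T0^[n+1] φ) y
          = g n y + (T0 (T1^[n] φ) y - T0 (T0^[n] φ) y) := by rw [e1, e0, hgn]; ring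
        _ = g n y + ∑ k ∈ Finset.range n, (T0^[k+1] (g (n-1-k))) y := by rw [hT0diff]
        _ = ∑ k ∈ Finset.range (n+1), (T0^[k] (g (n-k))) y := by
            rw [Finset.sum_range_succ' (fun k => (T0^[k] (g (n-k))) y) n]
            have hc : ∀ k ∈ Finset.range n, (T0^[k+1] (g (n-(k+1)))) y
                = (T0^[k+1] (g (n-1-k))) y := by
              intro k _
              have hidx : n - (k+1) = n-1-k := by omega
              rw [hidx]
            rw [Finset.sum_congr rfl hc]
            have hF0 : (T0^[0] (g (n-0))) y = g n y := rfl
            rw [hF0]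
            ring
        _ = ∑ k ∈ Finset.range (n+1), (T0^[k] (g (n+1-1-k))) y := by
            refine Finset.sum_congr rfl fun k _ => ?_
            have hidx : n + 1 - 1 - k = n - k := by omega
            rw [hidx]
  -- STAGE3
  have hgeom : Summable (fun m : ℕ => Q * ρ^m) :=
    (summable_geometric_of_lt_one hρ0.le hρ1).mul_left Q
  have hβabs_sum : Summable (fun m => |βs m|) :=
    Summable.of_nonneg_of_le (fun m => abs_nonneg _) hβabs hgeom
  have hβsum : Summable βs := hβabs_sum.of_abs
  have htsum_geom : ∑' m : ℕ, ρ^m = (1-ρ)⁻¹ := tsum_geometric_of_lt_one hρ0.le hρ1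
  have hsum_npow : Summable (fun n : ℕ => (n:ℝ) * ρ^n) := by
    have := summable_pow_mul_geometric_of_norm_lt_one (R := ℝ) 1
      (by rw [Real.norm_eq_abs, abs_of_pos hρ0]; exact hρ1)
    simpa using this
  set dn : ℕ → ℝ := fun n => (T1^[n] φ) x₀ - (T0^[n] φ) x₀ with hdndef
  have hdsum : ∀ n, dn n = ∑ k ∈ Finset.range n, b k (n-1-k) := fun n => htel n x₀
  have hdlim : Filter.Tendsto dn Filter.atTop (nhds (Iπ1 - Iπ0)) := by
    have hcm : Filter.Tendsto (fun n : ℕ => 2*B*(C*ρ^n)) Filter.atTop (nhds 0) := by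
      have := (tendsto_pow_atTop_nhds_zero_of_lt_one hρ0.le hρ1).const_mul (2*B*C)
      simpa [mul_assoc] using this
    have t1 : Filter.Tendsto (fun n => (T1^[n] φ) x₀) Filter.atTop (nhds Iπ1) := by
      rw [← tendsto_sub_nhds_zero_iff]
      refine squeeze_zero_norm' ?_ hcm
      refine Filter.eventually_atTop.2 ⟨1, fun n hn => ?_⟩
      rw [Real.norm_eq_abs]
      exact ha1fun l n hn x₀ hx₀ φ B hB0 hφm hφB
    have t0 : Filter.Tendsto (fun n => (T0^[n] φ) x₀) Filter.atTop (nhds Iπ0) := by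
      rw [← tendsto_sub_nhds_zero_iff]
      refine squeeze_zero_norm' ?_ hcm
      refine Filter.eventually_atTop.2 ⟨1, fun n hn => ?_⟩
      rw [Real.norm_eq_abs]
      exact ha1fun (l-1) n hn x₀ hx₀ φ B hB0 hφm hφB
    exact t1.sub t0
  have hdiff : ∀ n, |dn n - ∑ m ∈ Finset.range n, βs m| ≤ (2*Q*M) * ((n:ℝ) * ρ^(n-1)) := by
    intro n
    rw [hdsum n, ← Finset.sum_range_reflect (fun m => βs m) n, ← Finset.sum_sub_distrib]
    refine (Finset.abs_sum_le_sum_abs _ _).trans ?_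
    have hterm : ∀ k ∈ Finset.range n, |b k (n-1-k) - βs (n-1-k)| ≤ (2*Q*M) * ρ^(n-1) := by
      intro k hk
      have hk' := Finset.mem_range.1 hk
      have hexp : ρ^(n-1-k) * ρ^k = ρ^(n-1) := by
        rw [← pow_add]; congr 1; omega
      calc |b k (n-1-k) - βs (n-1-k)| ≤ 2*Q*M*(ρ^(n-1-k) * ρ^k) := hbβ k (n-1-k)
        _ = (2*Q*M) * ρ^(n-1) := by rw [hexp]
    refine (Finset.sum_le_sum hterm).trans ?_
    rw [Finset.sum_const, Finset.card_range, nsmul_eq_mul]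
    ring_nf
    exact le_refl _
  have hnpow1_lim : Filter.Tendsto (fun n : ℕ => (n:ℝ) * ρ^(n-1)) Filter.atTop (nhds 0) := by
    have h0 : Filter.Tendsto (fun n : ℕ => ρ⁻¹ * ((n:ℝ) * ρ^n)) Filter.atTop (nhds 0) := by
      have := hsum_npow.tendsto_atTop_zero.const_mul ρ⁻¹
      simpa using this
    refine h0.congr' ?_
    refine Filter.eventually_atTop.2 ⟨1, fun n hn => ?_⟩
    show ρ⁻¹ * ((n:ℝ) * ρ^n) = (n:ℝ) * ρ^(n-1)
    have hpow : ρ^n = ρ^(n-1) * ρ := by rw [← pow_succ]; congr 1; omega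
    rw [hpow]
    field_simp
  have hpartial_lim : Filter.Tendsto (fun n => ∑ m ∈ Finset.range n, βs m)
      Filter.atTop (nhds (Iπ1 - Iπ0)) := by
    have hz : Filter.Tendsto (fun n => dn n - ∑ m ∈ Finset.range n, βs m)
        Filter.atTop (nhds 0) := by
      refine squeeze_zero_norm' (Filter.Eventually.of_forall fun n => ?_)
        (by simpa using hnpow1_lim.const_mul (2*Q*M))
      rw [Real.norm_eq_abs]
      exact hdiff n
    have := hdlim.sub hz
    simpa using this
  have hΔeq : ∑' m, βs m = Iπ1 - Iπ0 :=
    tendsto_nhds_unique hβsum.hasSum.tendsto_sum_nat hpartial_lim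
  -- the per-term bias bound
  have hdnΔ : ∀ n, |dn n - (Iπ1 - Iπ0)| ≤ 2*Q*M*((n:ℝ) * ρ^(n-1)) + Q*(1-ρ)⁻¹*ρ^n := by
    intro n
    have e1 : Iπ1 - Iπ0 = (∑ m ∈ Finset.range n, βs m) + ∑' m, βs (m+n) := by
      rw [← hΔeq]
      exact (hβsum.sum_add_tsum_nat_add n).symm
    have htail : |∑' m, βs (m+n)| ≤ Q*(1-ρ)⁻¹*ρ^n := by
      have hs1 : Summable (fun m => βs (m+n)) := (summable_nat_add_iff n).2 hβsum
      have hs1' : Summable (fun m => |βs (m+n)|) := (summable_nat_add_iff n).2 hβabs_sum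
      have hs2 : Summable (fun m : ℕ => Q * ρ^(m+n)) := (summable_nat_add_iff n).2 hgeom
      have step1 : |∑' m, βs (m+n)| ≤ ∑' m, |βs (m+n)| := by
        have := norm_tsum_le_tsum_norm (f := fun m => βs (m+n)) (by simpa using hs1')
        simpa using this
      have step2 : ∑' m, |βs (m+n)| ≤ ∑' m : ℕ, Q * ρ^(m+n) :=
        Summable.tsum_le_tsum (fun m => hβabs (m+n)) hs1' hs2
      have step3 : ∑' m : ℕ, Q * ρ^(m+n) = Q*(1-ρ)⁻¹*ρ^n := by
        have hre : ∀ m : ℕ, Q * ρ^(m+n) = (Q * ρ^n) * ρ^m := by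
          intro m; rw [pow_add]; ring
        rw [tsum_congr hre, tsum_mul_left, htsum_geom]
        ring
      rw [← step3]
      exact step1.trans step2
    calc |dn n - (Iπ1 - Iπ0)|
        = |(dn n - ∑ m ∈ Finset.range n, βs m) - ∑' m, βs (m+n)| := by
          rw [e1]; congr 1; ring
      _ ≤ |dn n - ∑ m ∈ Finset.range n, βs m| + |∑' m, βs (m+n)| := abs_sub _ _
      _ ≤ 2*Q*M*((n:ℝ) * ρ^(n-1)) + Q*(1-ρ)⁻¹*ρ^n := add_le_add (hdiff n) htail
  -- compute the estimator's expectation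
  have hchain : ∀ l' n, ∫ ω, φ (mapChain (ξ l') V x₀ n ω) ∂P = ((tk (ξ l') μ)^[n] φ) x₀ :=
    fun l' n => integral_mapChain (hξmeas l') hVmeas hViid hVlaw x₀ n φ B hφm hφB
  have hint1 : ∀ l' n, Integrable (fun ω => φ (mapChain (ξ l') V x₀ n ω)) P :=
    fun l' n => integrable_of_abs_le
      (hφm.comp (mapChain_measurable (hξmeas l') hVmeas x₀ n)) (fun ω => hφB _)
  have hLHS : (∫ ω, (N : ℝ)⁻¹ * ∑ n ∈ Finset.Icc 1 N,
        (φ (mapChain (ξ l) V x₀ n ω) - φ (mapChain (ξ (l-1)) V x₀ n ω)) ∂P)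
      = (N:ℝ)⁻¹ * ∑ n ∈ Finset.Icc 1 N, dn n := by
    rw [MeasureTheory.integral_const_mul]
    congr 1
    calc ∫ ω, ∑ n ∈ Finset.Icc 1 N,
          (φ (mapChain (ξ l) V x₀ n ω) - φ (mapChain (ξ (l-1)) V x₀ n ω)) ∂P
        = ∑ n ∈ Finset.Icc 1 N, ∫ ω,
            (φ (mapChain (ξ l) V x₀ n ω) - φ (mapChain (ξ (l-1)) V x₀ n ω)) ∂P :=
          integral_finset_sum _ (fun n _ => (hint1 l n).sub (hint1 (l-1) n))
      _ = ∑ n ∈ Finset.Icc 1 N, dn n := by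
          refine Finset.sum_congr rfl fun n _ => ?_
          rw [integral_sub (hint1 l n) (hint1 (l-1) n), hchain l n, hchain (l-1) n]
  rw [hLHS]
  have hcard : (Finset.Icc 1 N).card = N := by rw [Nat.card_Icc]; omega
  have hN0 : (0:ℝ) < (N:ℝ) := by exact_mod_cast Nat.pos_of_ne_zero (by omega)
  have hsplit : (N:ℝ)⁻¹ * (∑ n ∈ Finset.Icc 1 N, dn n) - (Iπ1 - Iπ0)
      = (N:ℝ)⁻¹ * ∑ n ∈ Finset.Icc 1 N, (dn n - (Iπ1 - Iπ0)) := by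
    conv_rhs => rw [Finset.sum_sub_distrib, Finset.sum_const, hcard, nsmul_eq_mul]
    field_simp
  rw [show (N:ℝ)⁻¹ * (∑ n ∈ Finset.Icc 1 N, dn n) - (Iπ1 - Iπ0)
      = (N:ℝ)⁻¹ * ∑ n ∈ Finset.Icc 1 N, (dn n - (Iπ1 - Iπ0)) from hsplit]
  rw [abs_mul, abs_of_nonneg (inv_nonneg.2 hN0.le)]
  -- bound the summed bias
  have hsA : ∑ n ∈ Finset.Icc 1 N, ((n:ℝ) * ρ^(n-1)) ≤ ((1-ρ)⁻¹)^2 := by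
    have h1 : ∀ n ∈ Finset.Icc 1 N, (n:ℝ)*ρ^(n-1) = ρ⁻¹ * ((n:ℝ)*ρ^n) := by
      intro n hn
      have hn1 := (Finset.mem_Icc.1 hn).1
      have hpow : ρ^n = ρ^(n-1) * ρ := by rw [← pow_succ]; congr 1; omega
      rw [hpow]; field_simp
    rw [Finset.sum_congr rfl h1, ← Finset.mul_sum]
    have h2 : ∑ n ∈ Finset.Icc 1 N, (n:ℝ)*ρ^n ≤ ρ/(1-ρ)^2 := by
      have h3 := Summable.sum_le_tsum (Finset.Icc 1 N) (fun i _ => by positivity) hsum_npow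
      rwa [tsum_coe_mul_geometric_of_norm_lt_one
        (by rw [Real.norm_eq_abs, abs_of_pos hρ0]; exact hρ1)] at h3
    calc ρ⁻¹ * ∑ n ∈ Finset.Icc 1 N, (n:ℝ)*ρ^n ≤ ρ⁻¹ * (ρ/(1-ρ)^2) :=
          mul_le_mul_of_nonneg_left h2 (inv_nonneg.2 hρ0.le)
      _ = ((1-ρ)⁻¹)^2 := by field_simp
  have hsB : ∑ n ∈ Finset.Icc 1 N, ρ^n ≤ (1-ρ)⁻¹ := by
    have h3 := Summable.sum_le_tsum (Finset.Icc 1 N) (fun i _ => by positivity)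
      (summable_geometric_of_lt_one hρ0.le hρ1)
    rwa [htsum_geom] at h3
  have hsum_bound : |∑ n ∈ Finset.Icc 1 N, (dn n - (Iπ1 - Iπ0))|
      ≤ (2*M+1)*Q*((1-ρ)⁻¹)^2 := by
    refine (Finset.abs_sum_le_sum_abs _ _).trans ?_
    refine (Finset.sum_le_sum (fun n (hn : n ∈ Finset.Icc 1 N) => hdnΔ n)).trans ?_
    rw [Finset.sum_add_distrib]
    have hA2' : ∑ n ∈ Finset.Icc 1 N, 2*Q*M*((n:ℝ)*ρ^(n-1)) ≤ 2*Q*M*((1-ρ)⁻¹)^2 := by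
      rw [← Finset.mul_sum]
      exact mul_le_mul_of_nonneg_left hsA (by positivity)
    have hB2' : ∑ n ∈ Finset.Icc 1 N, Q*(1-ρ)⁻¹*ρ^n ≤ Q*(1-ρ)⁻¹*(1-ρ)⁻¹ := by
      rw [← Finset.mul_sum]
      exact mul_le_mul_of_nonneg_left hsB (by positivity)
    calc (∑ n ∈ Finset.Icc 1 N, 2*Q*M*((n:ℝ)*ρ^(n-1)))
          + ∑ n ∈ Finset.Icc 1 N, Q*(1-ρ)⁻¹*ρ^n
        ≤ 2*Q*M*((1-ρ)⁻¹)^2 + Q*(1-ρ)⁻¹*(1-ρ)⁻¹ := add_le_add hA2' hB2'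
      _ = (2*M+1)*Q*((1-ρ)⁻¹)^2 := by ring
  -- conclude
  have hfinal : (N:ℝ)⁻¹ * |∑ n ∈ Finset.Icc 1 N, (dn n - (Iπ1 - Iπ0))|
      ≤ (N:ℝ)⁻¹ * ((2*M+1)*Q*((1-ρ)⁻¹)^2) :=
    mul_le_mul_of_nonneg_left hsum_bound (inv_nonneg.2 hN0.le)
  refine hfinal.trans ?_
  have hBle : B ≤ max B L := le_max_left _ _
  rw [hQdef]
  rw [div_eq_mul_inv]
  calc (N:ℝ)⁻¹ * ((2*M+1)*(4*B*C*M^2*h l ^ β)*((1-ρ)⁻¹)^2)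
      = (4*C*M^2*(2*M+1)*((1-ρ)⁻¹)^2) * B * h l ^ β * (N:ℝ)⁻¹ := by ring
    _ ≤ (4*C*M^2*(2*M+1)*((1-ρ)⁻¹)^2) * (max B L) * h l ^ β * (N:ℝ)⁻¹ := by
        have hc0 : (0:ℝ) ≤ 4*C*M^2*(2*M+1)*((1-ρ)⁻¹)^2 := by positivity
        have := mul_le_mul_of_nonneg_left hBle hc0
        exact mul_le_mul_of_nonneg_right (mul_le_mul_of_nonneg_right this hhβ.le)
          (inv_nonneg.2 hN0.le)
    _ = 4*C*M^2*(2*M+1)*((1-ρ)⁻¹)^2 * (max B L) * h l ^ β * (N:ℝ)⁻¹ := by ring
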